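/- Reversal of a circular word: let 0 < p < q with gcd(p,q)=1, k ≥ 1, l > 1, and let w_0,…,w_{k−1} be words over Σ∪{b,e} each of length q. Then (i) for every 0 < i < q one has q − j_i = j_{q−i}; and (ii) with the convention j_q := q, the reversal of C(w_0,…,w_{k−1}) satisfies rev(C(w_0,…,w_{k−1})) = ∏_{i=1}^{q} ∏_{j=1}^{k} e^{q−j_i} rev(w_{k−j})^{l−1} b^{j_i}, where rev denotes reversal of a word. -/

import Mathlib

/-!
STATEMENT 2: Reversal of a circular word.
-/

namespace Stmt2

/-- The circular operator `C(w_0,…,w_{k−1}) = ∏_{i<q} ∏_{t<k} b^{q−j_i} (w_t)^{l−1} e^{j_i}`. -/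
def Cop {A : Type*} (b e : A) (q k l : ℕ) (j : ℕ → ℕ) (w : ℕ → List A) : List A :=
  (List.range q).flatMap fun i =>
    (List.range k).flatMap fun t =>
      List.replicate (q - j i) b ++ (List.replicate (l - 1) (w t)).flatten ++
        List.replicate (j i) e

private lemma flatten_replicate_reverse {A : Type*} (m : ℕ) (u : List A) :
    ((List.replicate m u).flatten).reverse = (List.replicate m u.reverse).flatten := by
  induction m with
  | zero => simp
  | succ n ih =>
    rw [List.replicate_succ, List.flatten_cons, List.reverse_append, ih,
        List.replicate_succ' (n := n), List.flatten_append]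
    simp

private lemma rev_flatMap_range {A : Type*} (q : ℕ) (f g : ℕ → List A)
    (h : ∀ i < q, (f i).reverse = g (q - 1 - i)) :
    ((List.range q).flatMap f).reverse = (List.range q).flatMap g := by
  rw [List.reverse_flatMap]
  have hrev : (List.range q).reverse = (List.range q).map (fun i => q - 1 - i) := by
    rw [List.range_eq_range', List.reverse_range', ← List.range_eq_range']
    simp
  rw [hrev, List.flatMap_map]
  refine List.flatMap_congr fun i hi => ?_
  have hi' := List.mem_range.mp hi
  have := h (q - 1 - i) (by omega)
  simpa [show q - 1 - (q - 1 - i) = i by omega] using this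

theorem reverse_of_circular_word
    {A : Type*} (b e : A) (hbe : b ≠ e)
    (p q k l : ℕ) (hp0 : 0 < p) (hpq : p < q) (hcop : Nat.Coprime p q)
    (hk : 1 ≤ k) (hl : 1 < l)
    (j : ℕ → ℕ) (hj : ∀ i < q, j i < q ∧ (p * j i) % q = i % q)
    (hjq : j q = q)
    (w : ℕ → List A) (hw : ∀ i < k, (w i).length = q) :
    (∀ i, 0 < i → i < q → q - j i = j (q - i)) ∧
    (Cop b e q k l j w).reverse =
      (List.range q).flatMap (fun i' =>
        (List.range k).flatMap (fun t' =>
          List.replicate (q - j (i' + 1)) e ++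
            (List.replicate (l - 1) (w (k - (t' + 1))).reverse).flatten ++
            List.replicate (j (i' + 1)) b)) := by
  have hq2 : 2 ≤ q := by omega
  haveI : NeZero q := ⟨by omega⟩
  have hj0 : j 0 = 0 := by
    obtain ⟨h1, h2⟩ := hj 0 (by omega)
    have hd : q ∣ p * j 0 := Nat.dvd_of_mod_eq_zero (by simpa using h2)
    exact Nat.eq_zero_of_dvd_of_lt
      (Nat.Coprime.dvd_of_dvd_mul_left (Nat.Coprime.symm hcop) hd) h1
  -- cast to ZMod q
  have hcast : ∀ i < q, ((p : ZMod q) * (j i : ZMod q) = (i : ZMod q)) := by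
    intro i hi
    have h2 := (hj i hi).2
    have : ((p * j i : ℕ) : ZMod q) = (i : ZMod q) :=
      (ZMod.natCast_eq_natCast_iff _ _ _).mpr h2
    push_cast at this
    exact this
  -- key lemma: for 1 ≤ m ≤ q, j (q - m) = q - j m, and j m ≤ q
  have key : ∀ m, 1 ≤ m → m ≤ q → j (q - m) = q - j m ∧ j m ≤ q := by
    intro m hm1 hmq
    rcases eq_or_lt_of_le hmq with rfl | hmlt
    · simp [hjq, hj0]
    · obtain ⟨ha1, _⟩ := hj m hmlt
      constructor
      · -- j (q - m) = q - j m
        have hq_m_lt : q - m < q := by omega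
        obtain ⟨hc1, _⟩ := hj (q - m) hq_m_lt
        have hja_pos : 0 < j m := by
          rcases Nat.eq_zero_or_pos (j m) with h | h
          swap
          · exact h
          · exfalso
            have h2 := (hj m hmlt).2
            rw [h, Nat.mul_zero, Nat.zero_mod, Nat.mod_eq_of_lt hmlt] at h2
            omega
        -- work in ZMod q
        have e1 : (p : ZMod q) * ((q - j m : ℕ) : ZMod q) = ((q - m : ℕ) : ZMod q) := by
          have h1 : ((q - j m : ℕ) : ZMod q) = -(j m : ZMod q) := by
            push_cast [Nat.cast_sub (le_of_lt ha1)]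
            simp [ZMod.natCast_self]
          have h2 : ((q - m : ℕ) : ZMod q) = -(m : ZMod q) := by
            push_cast [Nat.cast_sub (le_of_lt hmlt)]
            simp [ZMod.natCast_self]
          rw [h1, h2, mul_neg, hcast m hmlt]
        have e2 : (p : ZMod q) * ((j (q - m) : ℕ) : ZMod q) = ((q - m : ℕ) : ZMod q) :=
          hcast (q - m) hq_m_lt
        have e3 : ((q - j m : ℕ) : ZMod q) = ((j (q - m) : ℕ) : ZMod q) := by
          have hu : IsUnit (p : ZMod q) := (ZMod.unitOfCoprime p hcop).isUnit
          exact hu.mul_left_cancel (by rw [e1, e2])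
        have := congrArg ZMod.val e3
        rw [ZMod.val_cast_of_lt (by omega : q - j m < q),
            ZMod.val_cast_of_lt hc1] at this
        omega
      · exact le_of_lt ha1
  have part1 : ∀ i, 0 < i → i < q → q - j i = j (q - i) := by
    intro i h0 hlt
    exact ((key i h0 (le_of_lt hlt)).1).symm
  refine ⟨part1, ?_⟩
  -- the index facts needed for part 2
  have idx : ∀ i' < q, j (q - 1 - i') = q - j (i' + 1) ∧ q - j (q - 1 - i') = j (i' + 1) := by
    intro i' hi'
    have h1 : q - 1 - i' = q - (i' + 1) := by omega
    obtain ⟨hkey, hle⟩ := key (i' + 1) (by omega) (by omega)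
    constructor
    · rw [h1, hkey]
    · rw [h1, hkey]
      omega
  unfold Cop
  apply rev_flatMap_range
  intro i hi
  apply rev_flatMap_range
  intro t ht
  rw [List.reverse_append, List.reverse_append, List.reverse_replicate,
      List.reverse_replicate, flatten_replicate_reverse]
  obtain ⟨hA, hB⟩ := idx (q - 1 - i) (by omega)
  have hii : q - 1 - (q - 1 - i) = i := by omega
  rw [hii] at hA hB
  have hwidx : k - (k - 1 - t + 1) = t := by omega
  rw [hwidx, hB, hA]
  simp [List.append_assoc]

end Stmt2
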